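/- arXiv:1911.12471 — 2 statements merged into one kernel-verified Lean document; each statement's English description precedes it below -/
import Mathlib

section
/- Every connected critical graph other than K₁ and K₂ is 2-connected. -/
open SimpleGraph

/-- A set of vertices is independent if no two of its members are adjacent. -/
def IsIndepSet {V : Type*} (G : SimpleGraph V) (s : Set V) : Prop :=
  s.Pairwise fun a b => ¬ G.Adj a b

/-- The independence number of a graph: the maximum size of an independent set. -/
noncomputable def alpha {V : Type*} (G : SimpleGraph V) : ℕ :=
  sSup {n | ∃ s : Finset V, _root_.IsIndepSet G (s : Set V) ∧ s.card = n}

/-- A graph is critical if deleting any edge strictly increases the independence number. -/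
def IsCritical {V : Type*} (G : SimpleGraph V) : Prop :=
  ∀ e ∈ G.edgeSet, alpha G < alpha (G.deleteEdges {e})

section Aux

variable {V : Type*} [Fintype V] (G : SimpleGraph V)

lemma alpha_bddAbove :
    BddAbove {n | ∃ s : Finset V, _root_.IsIndepSet G (s : Set V) ∧ s.card = n} := by
  refine ⟨Fintype.card V, ?_⟩
  rintro n ⟨s, -, rfl⟩
  exact Finset.card_le_univ s

lemma card_le_alpha {s : Finset V} (h : _root_.IsIndepSet G (s : Set V)) : s.card ≤ alpha G :=
  le_csSup (alpha_bddAbove G) ⟨s, h, rfl⟩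

lemma alpha_attained : ∃ s : Finset V, _root_.IsIndepSet G (s : Set V) ∧ s.card = alpha G := by
  have h0 : (0 : ℕ) ∈ {n | ∃ s : Finset V, _root_.IsIndepSet G (s : Set V) ∧ s.card = n} :=
    ⟨∅, by simp [_root_.IsIndepSet], rfl⟩
  exact Nat.sSup_mem ⟨0, h0⟩ (alpha_bddAbove G)

/-- For a critical graph and an edge `vu`, a maximum independent set of `G - vu`
contains both endpoints, and the only adjacent pair inside it is `{v, u}`. -/
lemma exists_big_set {v u : V} (hadj : G.Adj v u) (hcrit : IsCritical G) :
    ∃ S : Finset V, alpha G < S.card ∧ v ∈ S ∧ u ∈ S ∧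
      (∀ x ∈ S, ∀ y ∈ S, G.Adj x y → (x = v ∧ y = u) ∨ (x = u ∧ y = v)) := by
  have he : s(v, u) ∈ G.edgeSet := G.mem_edgeSet.mpr hadj
  have hlt := hcrit _ he
  obtain ⟨S, hSindep, hScard⟩ := alpha_attained (G.deleteEdges {s(v, u)})
  have hScard' : alpha G < S.card := hScard ▸ hlt
  have key : ∀ x ∈ S, ∀ y ∈ S, G.Adj x y → (x = v ∧ y = u) ∨ (x = u ∧ y = v) := by
    intro x hx y hy hxy
    by_contra hcon
    have hne : x ≠ y := hxy.ne
    have := hSindep (by simpa using hx) (by simpa using hy) hne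
    apply this
    rw [deleteEdges_adj]
    refine ⟨hxy, ?_⟩
    simp only [Set.mem_singleton_iff, Sym2.eq_iff]
    tauto
  have hvS : v ∈ S := by
    by_contra hv
    have hind : _root_.IsIndepSet G (S : Set V) := by
      intro x hx y hy hne hxy
      rcases key x (by simpa using hx) y (by simpa using hy) hxy with ⟨h1, -⟩ | ⟨-, h2⟩
      · exact hv (h1 ▸ (by simpa using hx))
      · exact hv (h2 ▸ (by simpa using hy))
    exact absurd (card_le_alpha G hind) (by omega)
  have huS : u ∈ S := by
    by_contra hu
    have hind : _root_.IsIndepSet G (S : Set V) := by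
      intro x hx y hy hne hxy
      rcases key x (by simpa using hx) y (by simpa using hy) hxy with ⟨-, h1⟩ | ⟨h2, -⟩
      · exact hu (h1 ▸ (by simpa using hy))
      · exact hu (h2 ▸ (by simpa using hx))
    exact absurd (card_le_alpha G hind) (by omega)
  exact ⟨S, hScard', hvS, huS, key⟩

/-- The core counting argument: a critical graph has no cut structure with
`v` joined to both sides of a separation. -/
lemma no_cut {v u w : V} {C : Set V} (hcrit : IsCritical G)
    (hvu : G.Adj v u) (hvw : G.Adj v w)
    (hvC : v ∉ C) (huC : u ∈ C) (hwC : w ∉ C)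
    (hsep : ∀ x ∈ C, ∀ y, y ∉ C → y ≠ v → ¬ G.Adj x y) : False := by
  classical
  obtain ⟨S, hScard, hvS, huS, hS⟩ := exists_big_set G hvu hcrit
  obtain ⟨T, hTcard, hvT, hwT, hT⟩ := exists_big_set G hvw hcrit
  set SC := S.filter (· ∈ C) with hSC
  set SnC := S.filter (· ∉ C) with hSnC
  set TC := T.filter (· ∈ C) with hTC
  set TnC := T.filter (· ∉ C) with hTnC
  set Tn := TnC.erase v with hTn
  have hsplitS : SC.card + SnC.card = S.card := Finset.card_filter_add_card_filter_not _
  have hsplitT : TC.card + TnC.card = T.card := Finset.card_filter_add_card_filter_not _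
  have hvTnC : v ∈ TnC := Finset.mem_filter.mpr ⟨hvT, hvC⟩
  have hTncard : Tn.card = TnC.card - 1 := Finset.card_erase_of_mem hvTnC
  have hTnCpos : 1 ≤ TnC.card := Finset.card_pos.mpr ⟨v, hvTnC⟩
  -- membership characterizations
  have memSC : ∀ {x}, x ∈ SC → x ∈ S ∧ x ∈ C := fun h => Finset.mem_filter.mp h
  have memSnC : ∀ {x}, x ∈ SnC → x ∈ S ∧ x ∉ C := fun h => Finset.mem_filter.mp h
  have memTC : ∀ {x}, x ∈ TC → x ∈ T ∧ x ∈ C := fun h => Finset.mem_filter.mp h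
  have memTn : ∀ {x}, x ∈ Tn → x ∈ T ∧ x ∉ C ∧ x ≠ v := by
    intro x h
    have h1 := Finset.mem_of_mem_erase h
    have h2 := Finset.ne_of_mem_erase h
    exact ⟨(Finset.mem_filter.mp h1).1, (Finset.mem_filter.mp h1).2, h2⟩
  -- First independent set : TC ∪ SnC
  have hind1 : _root_.IsIndepSet G ((TC ∪ SnC : Finset V) : Set V) := by
    intro x hx y hy hne hxy
    simp only [Finset.coe_union, Set.mem_union, Finset.mem_coe] at hx hy
    -- helper for the cross case, ordered
    have cross : ∀ p q, p ∈ TC → q ∈ SnC → G.Adj p q → False := by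
      intro p q hp hq hpq
      obtain ⟨hpT, hpC⟩ := memTC hp
      obtain ⟨hqS, hqC⟩ := memSnC hq
      by_cases hqv : q = v
      · subst hqv
        rcases hT p hpT q hvT hpq with ⟨h1, -⟩ | ⟨h2, -⟩
        · exact hpq.ne (h1.trans rfl)
        · exact hwC (h2 ▸ hpC)
      · exact hsep p hpC q hqC hqv hpq
    rcases hx with hx | hx <;> rcases hy with hy | hy
    · obtain ⟨hxT, hxC⟩ := memTC hx
      obtain ⟨hyT, hyC⟩ := memTC hy
      rcases hT x hxT y hyT hxy with ⟨h1, -⟩ | ⟨-, h2⟩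
      · exact hvC (h1 ▸ hxC)
      · exact hvC (h2 ▸ hyC)
    · exact cross x y hx hy hxy
    · exact cross y x hy hx hxy.symm
    · obtain ⟨hxS, hxC⟩ := memSnC hx
      obtain ⟨hyS, hyC⟩ := memSnC hy
      rcases hS x hxS y hyS hxy with ⟨-, h1⟩ | ⟨h2, -⟩
      · exact hyC (h1 ▸ huC)
      · exact hxC (h2 ▸ huC)
  have hdisj1 : Disjoint TC SnC := by
    rw [Finset.disjoint_left]
    intro x hx hx'
    exact (memSnC hx').2 (memTC hx).2
  have hcard1 : TC.card + SnC.card ≤ alpha G := by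
    have := card_le_alpha G hind1
    rwa [Finset.card_union_of_disjoint hdisj1] at this
  -- Second independent set : SC ∪ Tn
  have hind2 : _root_.IsIndepSet G ((SC ∪ Tn : Finset V) : Set V) := by
    intro x hx y hy hne hxy
    simp only [Finset.coe_union, Set.mem_union, Finset.mem_coe] at hx hy
    have cross : ∀ p q, p ∈ SC → q ∈ Tn → G.Adj p q → False := by
      intro p q hp hq hpq
      obtain ⟨hpS, hpC⟩ := memSC hp
      obtain ⟨hqT, hqC, hqv⟩ := memTn hq
      exact hsep p hpC q hqC hqv hpq
    rcases hx with hx | hx <;> rcases hy with hy | hy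
    · obtain ⟨hxS, hxC⟩ := memSC hx
      obtain ⟨hyS, hyC⟩ := memSC hy
      rcases hS x hxS y hyS hxy with ⟨h1, -⟩ | ⟨-, h2⟩
      · exact hvC (h1 ▸ hxC)
      · exact hvC (h2 ▸ hyC)
    · exact cross x y hx hy hxy
    · exact cross y x hy hx hxy.symm
    · obtain ⟨hxT, hxC, hxv⟩ := memTn hx
      obtain ⟨hyT, hyC, hyv⟩ := memTn hy
      rcases hT x hxT y hyT hxy with ⟨h1, -⟩ | ⟨-, h2⟩
      · exact hxv h1
      · exact hyv h2
  have hdisj2 : Disjoint SC Tn := by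
    rw [Finset.disjoint_left]
    intro x hx hx'
    exact (memTn hx').2.1 (memSC hx).2
  have hcard2 : SC.card + Tn.card ≤ alpha G := by
    have := card_le_alpha G hind2
    rwa [Finset.card_union_of_disjoint hdisj2] at this
  omega

lemma reach_nbr {V : Type*} {G : SimpleGraph V} {v : V} {C : Set V} (hvC : v ∉ C)
    (hclosed : ∀ x y, G.Adj x y → x ∈ C → y ≠ v → y ∈ C) :
    ∀ {x y : V}, G.Walk x y → y ∈ C → x ∉ C → ∃ u ∈ C, G.Adj v u := by
  intro x y p
  induction p with
  | nil => intro hy hx; exact absurd hy hx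
  | @cons a b c hab p ih =>
    intro hy hx
    by_cases hbC : b ∈ C
    · by_cases hav : a = v
      · exact ⟨b, hbC, hav ▸ hab⟩
      · exact absurd (hclosed b a hab.symm hbC hav) hx
    · exact ih hy hbC

end Aux

/-- Every connected critical graph other than `K₁` and `K₂` is `2`-connected:
it has at least `3` vertices and stays connected after deleting any single vertex. -/
theorem stmt_2 {V : Type*} [Fintype V] (G : SimpleGraph V)
    (hconn : G.Connected) (hcrit : IsCritical G)
    (hK1 : ¬ Nonempty (G ≃g (⊤ : SimpleGraph (Fin 1))))
    (hK2 : ¬ Nonempty (G ≃g (⊤ : SimpleGraph (Fin 2)))) :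
    3 ≤ Fintype.card V ∧ ∀ v : V, (G.induce ({v}ᶜ : Set V)).Connected := by
  classical
  have hne : Nonempty V := hconn.nonempty
  have hpos : 1 ≤ Fintype.card V := Fintype.card_pos
  -- card ≠ 1
  have hne1 : Fintype.card V ≠ 1 := by
    intro h1
    apply hK1
    have hsub : Subsingleton V := Fintype.card_le_one_iff_subsingleton.mp h1.le
    refine ⟨⟨Fintype.equivFinOfCardEq h1, ?_⟩⟩
    intro a b
    simp only [top_adj]
    constructor
    · intro h; exact absurd (Subsingleton.elim a b) (by
        intro hab; exact h (by rw [hab]))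
    · intro h; exact absurd (Subsingleton.elim a b) h.ne
  -- in the 2-vertex case every pair of distinct vertices is adjacent
  have hadj_of_two : Fintype.card V = 2 → ∀ x y : V, x ≠ y → G.Adj x y := by
    intro h2 x y hxy
    obtain ⟨p⟩ := hconn.preconnected x y
    cases p with
    | nil => exact absurd rfl hxy
    | @cons _ c _ hxc q =>
      have hcx : c ≠ x := (G.ne_of_adj hxc).symm
      have hcy : c = y := by
        by_contra hcy
        have : ({x, c, y} : Finset V).card = 3 := by
          rw [Finset.card_insert_of_notMem (by simp [hcx.symm, hxy]),
            Finset.card_insert_of_notMem (by simp [hcy])]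
          simp
        have hle := Finset.card_le_univ ({x, c, y} : Finset V)
        rw [this] at hle
        omega
      exact hcy ▸ hxc
  have hne2 : Fintype.card V ≠ 2 := by
    intro h2
    apply hK2
    refine ⟨⟨Fintype.equivFinOfCardEq h2, ?_⟩⟩
    intro a b
    simp only [top_adj, ne_eq, Equiv.apply_eq_iff_eq]
    constructor
    · intro h; exact hadj_of_two h2 a b h
    · intro h; exact h.ne
  have hcard3 : 3 ≤ Fintype.card V := by omega
  refine ⟨hcard3, ?_⟩
  intro v
  set H := G.induce ({v}ᶜ : Set V) with hH
  haveI hnonempty : Nonempty ({v}ᶜ : Set V) := by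
    have : Nontrivial V := Fintype.one_lt_card_iff_nontrivial.mp (by omega)
    obtain ⟨x, hx⟩ := exists_ne v
    exact ⟨⟨x, hx⟩⟩
  refine ⟨?_⟩
  intro a b
  by_contra hnab
  -- the component of `a` in `G - v`
  set C : Set V := {x | ∃ h : x ∈ ({v}ᶜ : Set V), H.Reachable ⟨x, h⟩ a} with hCdef
  have hvC : v ∉ C := by
    rintro ⟨h, -⟩
    exact h rfl
  have haC : (a : V) ∈ C := ⟨a.2, by rw [Subtype.eta]⟩
  have hbC : (b : V) ∉ C := by
    rintro ⟨h, hr⟩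
    rw [Subtype.eta] at hr
    exact hnab hr.symm
  have hclosedC : ∀ x y, G.Adj x y → x ∈ C → y ≠ v → y ∈ C := by
    rintro x y hxy ⟨hx, hrx⟩ hyv
    have hy : y ∈ ({v}ᶜ : Set V) := hyv
    have hHadj : H.Adj ⟨y, hy⟩ ⟨x, hx⟩ := by
      simp [hH, comap_adj, hxy.symm]
    exact ⟨hy, hHadj.reachable.trans hrx⟩
  -- v is adjacent to some u in C
  obtain ⟨pw⟩ := hconn.preconnected (b : V) (a : V)
  obtain ⟨u, huC, hvu⟩ := reach_nbr hvC hclosedC pw haC hbC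
  -- the component of `b`
  set D : Set V := {x | ∃ h : x ∈ ({v}ᶜ : Set V), H.Reachable ⟨x, h⟩ b} with hDdef
  have hvD : v ∉ D := by
    rintro ⟨h, -⟩
    exact h rfl
  have hbD : (b : V) ∈ D := ⟨b.2, by rw [Subtype.eta]⟩
  have haD : (a : V) ∉ D := by
    rintro ⟨h, hr⟩
    rw [Subtype.eta] at hr
    exact hnab hr
  have hclosedD : ∀ x y, G.Adj x y → x ∈ D → y ≠ v → y ∈ D := by
    rintro x y hxy ⟨hx, hrx⟩ hyv
    have hy : y ∈ ({v}ᶜ : Set V) := hyv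
    have hHadj : H.Adj ⟨y, hy⟩ ⟨x, hx⟩ := by
      simp [hH, comap_adj, hxy.symm]
    exact ⟨hy, hHadj.reachable.trans hrx⟩
  obtain ⟨pw'⟩ := hconn.preconnected (a : V) (b : V)
  obtain ⟨w, hwD, hvw⟩ := reach_nbr hvD hclosedD pw' hbD haD
  have hwC : w ∉ C := by
    rintro ⟨hwmem, hrwa⟩
    obtain ⟨hwmem', hrwb⟩ := hwD
    exact hnab (hrwa.symm.trans (by convert hrwb))
  -- separation property of C
  have hsep : ∀ x ∈ C, ∀ y, y ∉ C → y ≠ v → ¬ G.Adj x y := by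
    intro x hx y hy hyv hxy
    exact hy (hclosedC x y hxy hx hyv)
  exact no_cut G hcrit hvu hvw hvC huC hwC hsep
end

section
/- Let G be a connected critical triangle-free graph with maximum degree at most 3 that is 2-connected, and suppose G has a 2-element vertex cutset {v, w}. Then v and w are not adjacent. -/
open SimpleGraph

lemma indep_card_le {V : Type*} [Fintype V] (G : SimpleGraph V) {s : Finset V}
    (h : _root_.IsIndepSet G ↑s) : s.card ≤ alpha G := by
  apply le_csSup
  · exact ⟨Fintype.card V, fun n hn => by
      obtain ⟨t, _, ht⟩ := hn; exact ht ▸ (Finset.card_le_univ t).trans_eq (Finset.card_univ)⟩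
  · exact ⟨s, h, rfl⟩

lemma exists_max_indep {V : Type*} [Fintype V] (G : SimpleGraph V) :
    ∃ s : Finset V, _root_.IsIndepSet G ↑s ∧ s.card = alpha G := by
  have h := Nat.sSup_mem (s := {n | ∃ s : Finset V, _root_.IsIndepSet G (s : Set V) ∧ s.card = n})
    ⟨0, ∅, by simp [_root_.IsIndepSet], by simp⟩
    ⟨Fintype.card V, fun n hn => by
      obtain ⟨t, _, ht⟩ := hn; exact ht ▸ (Finset.card_le_univ t).trans_eq (Finset.card_univ)⟩
  exact h

lemma sym2_ne_snd {V : Type*} {x y v w : V} (hx : x ≠ w) (hy : y ≠ w) :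
    s(x,y) ≠ s(v,w) := by
  intro h
  rcases Sym2.eq_iff.mp h with ⟨_, h2⟩ | ⟨h1, _⟩
  · exact hy h2
  · exact hx h1

lemma sym2_ne_fst {V : Type*} {x y v w : V} (hx : x ≠ v) (hy : y ≠ v) :
    s(x,y) ≠ s(v,w) := by
  intro h
  rcases Sym2.eq_iff.mp h with ⟨h1, _⟩ | ⟨_, h2⟩
  · exact hx h1
  · exact hy h2

lemma nonadj_of_del {V : Type*} {G : SimpleGraph V} {e : Sym2 V} {I : Finset V}
    (hI : _root_.IsIndepSet (G.deleteEdges {e}) ↑I) {x y : V}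
    (hx : x ∈ I) (hy : y ∈ I) (hne : x ≠ y) (he : s(x,y) ≠ e) : ¬ G.Adj x y := by
  intro h
  exact hI (Finset.mem_coe.mpr hx) (Finset.mem_coe.mpr hy) hne
    (SimpleGraph.deleteEdges_adj.mpr ⟨h, by simpa using he⟩)

lemma indep_of_subset_del {V : Type*} {G : SimpleGraph V} {e : Sym2 V} {I : Finset V}
    (hI : _root_.IsIndepSet (G.deleteEdges {e}) ↑I) {s : Finset V} (hsub : s ⊆ I)
    (he : ∀ x ∈ s, ∀ y ∈ s, s(x,y) ≠ e) : _root_.IsIndepSet G ↑s := by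
  intro x hx y hy hne
  exact nonadj_of_del hI (hsub (Finset.mem_coe.mp hx)) (hsub (Finset.mem_coe.mp hy)) hne
    (he x (Finset.mem_coe.mp hx) y (Finset.mem_coe.mp hy))

lemma indep_union {V : Type*} [DecidableEq V] {G : SimpleGraph V} {s t : Finset V}
    (hs : _root_.IsIndepSet G ↑s) (ht : _root_.IsIndepSet G ↑t)
    (hst : ∀ x ∈ s, ∀ y ∈ t, ¬ G.Adj x y) : _root_.IsIndepSet G ↑(s ∪ t) := by
  intro x hx y hy hne hadj
  simp only [Finset.coe_union, Set.mem_union, Finset.mem_coe] at hx hy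
  rcases hx with hx | hx <;> rcases hy with hy | hy
  · exact hs (Finset.mem_coe.mpr hx) (Finset.mem_coe.mpr hy) hne hadj
  · exact hst x hx y hy hadj
  · exact hst y hy x hx hadj.symm
  · exact ht (Finset.mem_coe.mpr hx) (Finset.mem_coe.mpr hy) hne hadj

lemma endpoints_mem {V : Type*} [Fintype V] {G : SimpleGraph V} {p q : V} (hpq : G.Adj p q)
    {I : Finset V} (hI : _root_.IsIndepSet (G.deleteEdges {s(p,q)}) ↑I)
    (hcard : alpha G < I.card) : p ∈ I ∧ q ∈ I := by
  by_contra h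
  have hind : _root_.IsIndepSet G ↑I := by
    apply indep_of_subset_del hI (subset_refl _)
    intro x hx y hy heq
    rcases Sym2.eq_iff.mp heq with ⟨h1, h2⟩ | ⟨h1, h2⟩
    · exact h ⟨h1 ▸ hx, h2 ▸ hy⟩
    · exact h ⟨h2 ▸ hy, h1 ▸ hx⟩
  exact absurd (indep_card_le G hind) (not_le.mpr hcard)


/-- In a `2`-connected connected critical triangle-free graph with maximum degree at most
`3`, the two vertices of any `2`-element vertex cutset are not adjacent. -/
theorem stmt_15 {V : Type*} [Fintype V] (G : SimpleGraph V) [DecidableRel G.Adj]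
    (hconn : G.Connected) (hcrit : IsCritical G) (htf : G.CliqueFree 3)
    (hdeg : ∀ x, G.degree x ≤ 3)
    (h2conn : 3 ≤ Fintype.card V ∧ ∀ x : V, (G.induce ({x}ᶜ : Set V)).Connected)
    (v w : V) (hvw : v ≠ w)
    (hcut : ¬ (G.induce (({v, w} : Set V)ᶜ)).Preconnected) :
    ¬ G.Adj v w := by

  classical
  intro hadj
  rw [SimpleGraph.Preconnected] at hcut
  push_neg at hcut
  obtain ⟨x0, y0, hxy⟩ := hcut
  set A : Set V := {u | ∃ h : u ∈ (({v, w} : Set V)ᶜ), (G.induce (({v, w} : Set V)ᶜ)).Reachable x0 ⟨u, h⟩} with hAdef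
  set B : Set V := {u | ∃ h : u ∈ (({v, w} : Set V)ᶜ), ¬ (G.induce (({v, w} : Set V)ᶜ)).Reachable x0 ⟨u, h⟩} with hBdef
  have hmemC : ∀ u : V, u ∈ (({v, w} : Set V)ᶜ) ↔ u ≠ v ∧ u ≠ w := by
    intro u
    simp only [Set.mem_compl_iff, Set.mem_insert_iff, Set.mem_singleton_iff]
    tauto
  have hAC : ∀ u ∈ A, u ≠ v ∧ u ≠ w := fun u hu => (hmemC u).mp hu.choose
  have hBC : ∀ u ∈ B, u ≠ v ∧ u ≠ w := fun u hu => (hmemC u).mp hu.choose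
  have hABdisj : ∀ u, u ∈ A → u ∈ B → False := by
    rintro u ⟨h1, hr⟩ ⟨h2, hnr⟩
    exact hnr hr
  have hcover : ∀ u, u ≠ v → u ≠ w → u ∈ A ∨ u ∈ B := by
    intro u huv huw
    have hu : u ∈ (({v, w} : Set V)ᶜ) := (hmemC u).mpr ⟨huv, huw⟩
    by_cases hr : (G.induce (({v, w} : Set V)ᶜ)).Reachable x0 ⟨u, hu⟩
    · exact Or.inl ⟨hu, hr⟩
    · exact Or.inr ⟨hu, hr⟩
  have hABadj : ∀ x ∈ A, ∀ y ∈ B, ¬ G.Adj x y := by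
    rintro x ⟨hx, hrx⟩ y ⟨hy, hry⟩ hadj'
    exact hry (hrx.trans (SimpleGraph.Adj.reachable
      (show (G.induce (({v, w} : Set V)ᶜ)).Adj ⟨x, hx⟩ ⟨y, hy⟩ by simpa using hadj')))
  have hx0A : (x0 : V) ∈ A := ⟨x0.2, SimpleGraph.Reachable.refl _⟩
  have hy0B : (y0 : V) ∈ B := ⟨y0.2, fun hr => hxy (by rwa [Subtype.coe_eta] at hr)⟩
  -- v has a neighbor in A
  have hva : ∃ a ∈ A, G.Adj v a := by
    by_contra hno
    push_neg at hno
    have hcw := (h2conn.2 w).preconnected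
    have hx0w : (x0 : V) ∈ ({w}ᶜ : Set V) := by
      have := ((hmemC x0).mp x0.2).2; simpa using this
    have hy0w : (y0 : V) ∈ ({w}ᶜ : Set V) := by
      have := ((hmemC y0).mp y0.2).2; simpa using this
    obtain ⟨p⟩ := hcw ⟨(x0 : V), hx0w⟩ ⟨(y0 : V), hy0w⟩
    have claim : ∀ (z1 z2 : ({w}ᶜ : Set V)) (_ : (G.induce ({w}ᶜ : Set V)).Walk z1 z2),
        (z1 : V) ∈ A → (z2 : V) ∈ A := by
      intro z1 z2 p
      induction p with
      | nil => exact id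
      | @cons u x z hadj' p ih =>
        intro hu
        apply ih
        have hGadj : G.Adj (u : V) (x : V) := by
          have := hadj'; simpa using this
        by_cases hxv : (x : V) = v
        · exact absurd (hxv ▸ hGadj.symm) (hno (u : V) hu)
        · have hxw : (x : V) ≠ w := fun h => by
            have hx2 := x.2
            rw [h] at hx2
            simp at hx2
          have hmem : (x : V) ∈ (({v, w} : Set V)ᶜ) := (hmemC _).mpr ⟨hxv, hxw⟩
          obtain ⟨huC, hur⟩ := hu
          exact ⟨hmem, hur.trans (SimpleGraph.Adj.reachable
            (show (G.induce (({v, w} : Set V)ᶜ)).Adj ⟨(u : V), huC⟩ ⟨(x : V), hmem⟩ by simpa using hGadj))⟩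
    exact hABdisj _ (claim _ _ p hx0A) hy0B
  -- v has a neighbor in B
  have hvb : ∃ b ∈ B, G.Adj v b := by
    by_contra hno
    push_neg at hno
    have hcw := (h2conn.2 w).preconnected
    have hx0w : (x0 : V) ∈ ({w}ᶜ : Set V) := by
      have := ((hmemC x0).mp x0.2).2; simpa using this
    have hy0w : (y0 : V) ∈ ({w}ᶜ : Set V) := by
      have := ((hmemC y0).mp y0.2).2; simpa using this
    obtain ⟨p⟩ := hcw ⟨(y0 : V), hy0w⟩ ⟨(x0 : V), hx0w⟩
    have claim : ∀ (z1 z2 : ({w}ᶜ : Set V)) (_ : (G.induce ({w}ᶜ : Set V)).Walk z1 z2),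
        (z1 : V) ∈ B → (z2 : V) ∈ B := by
      intro z1 z2 p
      induction p with
      | nil => exact id
      | @cons u x z hadj' p ih =>
        intro hu
        apply ih
        have hGadj : G.Adj (u : V) (x : V) := by
          have := hadj'; simpa using this
        by_cases hxv : (x : V) = v
        · exact absurd (hxv ▸ hGadj.symm) (hno (u : V) hu)
        · have hxw : (x : V) ≠ w := fun h => by
            have hx2 := x.2
            rw [h] at hx2
            simp at hx2
          have hmem : (x : V) ∈ (({v, w} : Set V)ᶜ) := (hmemC _).mpr ⟨hxv, hxw⟩
          obtain ⟨huC, hunr⟩ := hu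
          refine ⟨hmem, fun hr => hunr (hr.trans (SimpleGraph.Adj.reachable
            (show (G.induce (({v, w} : Set V)ᶜ)).Adj ⟨(x : V), hmem⟩ ⟨(u : V), huC⟩ by simpa using hGadj.symm)))⟩
    exact hABdisj _ hx0A (claim _ _ p hy0B)
  obtain ⟨a, haA, hvaAdj⟩ := hva
  obtain ⟨b, hbB, hvbAdj⟩ := hvb
  have hav : a ≠ v := (hAC a haA).1
  have haw : a ≠ w := (hAC a haA).2
  have hbv : b ≠ v := (hBC b hbB).1
  have hbw : b ≠ w := (hBC b hbB).2
  have hab : a ≠ b := fun h => hABdisj a haA (h ▸ hbB)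
  set n := alpha G with hn
  -- the three critical independent sets
  obtain ⟨I, hI, hIcard⟩ := exists_max_indep (G.deleteEdges {s(v,w)})
  have hIcard' : n < I.card := hIcard ▸ hcrit s(v,w) (G.mem_edgeSet.mpr hadj)
  obtain ⟨J, hJ, hJcard⟩ := exists_max_indep (G.deleteEdges {s(v,a)})
  have hJcard' : n < J.card := hJcard ▸ hcrit s(v,a) (G.mem_edgeSet.mpr hvaAdj)
  obtain ⟨L, hL, hLcard⟩ := exists_max_indep (G.deleteEdges {s(v,b)})
  have hLcard' : n < L.card := hLcard ▸ hcrit s(v,b) (G.mem_edgeSet.mpr hvbAdj)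
  obtain ⟨hvI, hwI⟩ := endpoints_mem hadj hI hIcard'
  obtain ⟨hvJ, haJ⟩ := endpoints_mem hvaAdj hJ hJcard'
  obtain ⟨hvL, hbL⟩ := endpoints_mem hvbAdj hL hLcard'
  have hwJ : w ∉ J := fun hwJ =>
    nonadj_of_del hJ hvJ hwJ hvw (sym2_ne_snd hav.symm haw.symm) hadj
  have hwL : w ∉ L := fun hwL =>
    nonadj_of_del hL hvL hwL hvw (sym2_ne_snd hbv.symm hbw.symm) hadj
  set IA := I.filter (· ∈ A) with hIA
  set IB := I.filter (· ∈ B) with hIB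
  set JA := J.filter (· ∈ A) with hJA
  set JB := J.filter (· ∈ B) with hJB
  set LA := L.filter (· ∈ A) with hLA
  set LB := L.filter (· ∈ B) with hLB
  have memA_of : ∀ {S : Finset V} {x : V}, x ∈ S.filter (· ∈ A) → x ∈ A :=
    fun h => (Finset.mem_filter.mp h).2
  have memB_of : ∀ {S : Finset V} {x : V}, x ∈ S.filter (· ∈ B) → x ∈ B :=
    fun h => (Finset.mem_filter.mp h).2
  have hneB_a : ∀ {x : V}, x ∈ B → x ≠ a := fun hx h => hABdisj a haA (h ▸ hx)
  have hneA_b : ∀ {x : V}, x ∈ A → x ≠ b := fun hx h => hABdisj b (h ▸ hx) hbB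
  -- splitting bounds
  have card2 : ({v, w} : Finset V).card ≤ 2 :=
    (Finset.card_insert_le _ _).trans (by simp)
  have hIsplit : I.card ≤ IA.card + IB.card + 2 := by
    have hsub : I ⊆ (IA ∪ IB) ∪ {v, w} := by
      intro u hu
      by_cases huv : u = v
      · exact Finset.mem_union.mpr (Or.inr (by simp [huv]))
      by_cases huw : u = w
      · exact Finset.mem_union.mpr (Or.inr (by simp [huw]))
      rcases hcover u huv huw with h | h
      · exact Finset.mem_union.mpr (Or.inl (Finset.mem_union.mpr
          (Or.inl (Finset.mem_filter.mpr ⟨hu, h⟩))))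
      · exact Finset.mem_union.mpr (Or.inl (Finset.mem_union.mpr
          (Or.inr (Finset.mem_filter.mpr ⟨hu, h⟩))))
    calc I.card ≤ ((IA ∪ IB) ∪ {v, w}).card := Finset.card_le_card hsub
      _ ≤ (IA ∪ IB).card + ({v, w} : Finset V).card := Finset.card_union_le _ _
      _ ≤ IA.card + IB.card + 2 := by
          have := Finset.card_union_le IA IB; omega
  have hJsplit : J.card ≤ JA.card + JB.card + 1 := by
    have hsub : J ⊆ (JA ∪ JB) ∪ {v} := by
      intro u hu
      by_cases huv : u = v
      · exact Finset.mem_union.mpr (Or.inr (by simp [huv]))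
      have huw : u ≠ w := fun h => hwJ (h ▸ hu)
      rcases hcover u huv huw with h | h
      · exact Finset.mem_union.mpr (Or.inl (Finset.mem_union.mpr
          (Or.inl (Finset.mem_filter.mpr ⟨hu, h⟩))))
      · exact Finset.mem_union.mpr (Or.inl (Finset.mem_union.mpr
          (Or.inr (Finset.mem_filter.mpr ⟨hu, h⟩))))
    calc J.card ≤ ((JA ∪ JB) ∪ {v}).card := Finset.card_le_card hsub
      _ ≤ (JA ∪ JB).card + 1 := by
          have := Finset.card_union_le (JA ∪ JB) ({v} : Finset V); simpa using this
      _ ≤ JA.card + JB.card + 1 := by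
          have := Finset.card_union_le JA JB; omega
  have hLsplit : L.card ≤ LA.card + LB.card + 1 := by
    have hsub : L ⊆ (LA ∪ LB) ∪ {v} := by
      intro u hu
      by_cases huv : u = v
      · exact Finset.mem_union.mpr (Or.inr (by simp [huv]))
      have huw : u ≠ w := fun h => hwL (h ▸ hu)
      rcases hcover u huv huw with h | h
      · exact Finset.mem_union.mpr (Or.inl (Finset.mem_union.mpr
          (Or.inl (Finset.mem_filter.mpr ⟨hu, h⟩))))
      · exact Finset.mem_union.mpr (Or.inl (Finset.mem_union.mpr
          (Or.inr (Finset.mem_filter.mpr ⟨hu, h⟩))))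
    calc L.card ≤ ((LA ∪ LB) ∪ {v}).card := Finset.card_le_card hsub
      _ ≤ (LA ∪ LB).card + 1 := by
          have := Finset.card_union_le (LA ∪ LB) ({v} : Finset V); simpa using this
      _ ≤ LA.card + LB.card + 1 := by
          have := Finset.card_union_le LA LB; omega
  -- independent set X1 = (IA ∪ {v}) ∪ JB
  have hindIAv : _root_.IsIndepSet G ↑(IA ∪ {v}) := by
    apply indep_of_subset_del hI
      (Finset.union_subset (Finset.filter_subset _ _) (by simpa using hvI))
    have hnw : ∀ x ∈ IA ∪ ({v} : Finset V), x ≠ w := by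
      intro x hx
      rcases Finset.mem_union.mp hx with h | h
      · exact (hAC x (memA_of h)).2
      · exact (Finset.mem_singleton.mp h) ▸ hvw
    exact fun x hx y hy => sym2_ne_snd (hnw x hx) (hnw y hy)
  have hindJB : _root_.IsIndepSet G ↑JB := by
    apply indep_of_subset_del hJ (Finset.filter_subset _ _)
    exact fun x hx y hy => sym2_ne_snd (hneB_a (memB_of hx)) (hneB_a (memB_of hy))
  have cross1 : ∀ x ∈ IA ∪ ({v} : Finset V), ∀ y ∈ JB, ¬ G.Adj x y := by
    intro x hx y hy
    have hyB : y ∈ B := memB_of hy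
    rcases Finset.mem_union.mp hx with h | h
    · exact hABadj x (memA_of h) y hyB
    · have hxv := Finset.mem_singleton.mp h
      subst hxv
      exact nonadj_of_del hJ hvJ (Finset.mem_filter.mp hy).1 (hBC y hyB).1.symm
        (sym2_ne_snd hav.symm (hneB_a hyB))
  have hX1le : IA.card + 1 + JB.card ≤ n := by
    have h := indep_card_le G (indep_union hindIAv hindJB cross1)
    have hd1 : Disjoint IA ({v} : Finset V) :=
      Finset.disjoint_singleton_right.mpr (fun h => (hAC v (memA_of h)).1 rfl)
    have hdAB : Disjoint IA JB :=
      Finset.disjoint_left.mpr (fun _ hx hx' => hABdisj _ (memA_of hx) (memB_of hx'))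
    have hd2 : Disjoint (IA ∪ {v}) JB := Finset.disjoint_union_left.mpr
      ⟨hdAB, Finset.disjoint_singleton_left.mpr (fun h => (hBC v (memB_of h)).1 rfl)⟩
    rwa [Finset.card_union_of_disjoint hd2, Finset.card_union_of_disjoint hd1,
      Finset.card_singleton] at h
  -- independent set X2 = (LA ∪ {v}) ∪ IB
  have hindLAv : _root_.IsIndepSet G ↑(LA ∪ {v}) := by
    apply indep_of_subset_del hL
      (Finset.union_subset (Finset.filter_subset _ _) (by simpa using hvL))
    have hnb : ∀ x ∈ LA ∪ ({v} : Finset V), x ≠ b := by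
      intro x hx
      rcases Finset.mem_union.mp hx with h | h
      · exact hneA_b (memA_of h)
      · exact (Finset.mem_singleton.mp h) ▸ hbv.symm
    exact fun x hx y hy => sym2_ne_snd (hnb x hx) (hnb y hy)
  have hindIB : _root_.IsIndepSet G ↑IB := by
    apply indep_of_subset_del hI (Finset.filter_subset _ _)
    exact fun x hx y hy => sym2_ne_snd (hBC x (memB_of hx)).2 (hBC y (memB_of hy)).2
  have cross2 : ∀ x ∈ LA ∪ ({v} : Finset V), ∀ y ∈ IB, ¬ G.Adj x y := by
    intro x hx y hy
    have hyB : y ∈ B := memB_of hy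
    rcases Finset.mem_union.mp hx with h | h
    · exact hABadj x (memA_of h) y hyB
    · have hxv := Finset.mem_singleton.mp h
      subst hxv
      exact nonadj_of_del hI hvI (Finset.mem_filter.mp hy).1 (hBC y hyB).1.symm
        (sym2_ne_snd hvw (hBC y hyB).2)
  have hX2le : LA.card + 1 + IB.card ≤ n := by
    have h := indep_card_le G (indep_union hindLAv hindIB cross2)
    have hd1 : Disjoint LA ({v} : Finset V) :=
      Finset.disjoint_singleton_right.mpr (fun h => (hAC v (memA_of h)).1 rfl)
    have hdAB : Disjoint LA IB :=
      Finset.disjoint_left.mpr (fun _ hx hx' => hABdisj _ (memA_of hx) (memB_of hx'))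
    have hd2 : Disjoint (LA ∪ {v}) IB := Finset.disjoint_union_left.mpr
      ⟨hdAB, Finset.disjoint_singleton_left.mpr (fun h => (hBC v (memB_of h)).1 rfl)⟩
    rwa [Finset.card_union_of_disjoint hd2, Finset.card_union_of_disjoint hd1,
      Finset.card_singleton] at h
  -- independent set Y = JA ∪ LB
  have hindJA : _root_.IsIndepSet G ↑JA := by
    apply indep_of_subset_del hJ (Finset.filter_subset _ _)
    exact fun x hx y hy => sym2_ne_fst (hAC x (memA_of hx)).1 (hAC y (memA_of hy)).1
  have hindLB : _root_.IsIndepSet G ↑LB := by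
    apply indep_of_subset_del hL (Finset.filter_subset _ _)
    exact fun x hx y hy => sym2_ne_fst (hBC x (memB_of hx)).1 (hBC y (memB_of hy)).1
  have hYle : JA.card + LB.card ≤ n := by
    have h := indep_card_le G (indep_union hindJA hindLB
      (fun x hx y hy => hABadj x (memA_of hx) y (memB_of hy)))
    have hd : Disjoint JA LB :=
      Finset.disjoint_left.mpr (fun _ hx hx' => hABdisj _ (memA_of hx) (memB_of hx'))
    rwa [Finset.card_union_of_disjoint hd] at h
  omega
end
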